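/- Let f' be a real-valued predictor on (X̃,Ã) whose sign is α-discriminatory at threshold 0 under a distribution D̃ with P(Ã=1)=δ and whose Ã=1 conditional matches a distribution D (i.e., P_{D̃}(X̃=[0,x],Ỹ=y|Ã=1)=P_D(X=x,Y=y)). Then the predictor f''(x)=f'([0,x],1) satisfies L^{01}_D(f'') ≤ L^{01}_{D̃}(f') + α(1−δ). -/
import Mathlib


open MeasureTheory

/-- Post hoc reduction step of the hardness proof.  `F = f'` is a real-valued predictor on a
distribution `μ` over `(X̃, Ã, Ỹ)` whose sign is `α`-discriminatory at threshold `0`, with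
`P(Ã = 1) = δ`, conditional label marginals matching across groups, and the `Ã = 1`
conditional matching the original distribution `D`.  Then the 0-1 loss on `D` of
`f''(x) = f'([0,x], 1)` — expressed via the `Ã = 1` conditionals — is at most
`L^{01}_{D̃}(f') + α(1 - δ)`. -/
theorem stmt18 {Ω : Type*} [MeasurableSpace Ω] (μ : Measure Ω) [IsProbabilityMeasure μ]
    (Ytil : Ω → ℝ) (Atil : Ω → Bool) (F : Ω → ℝ)
    (hYm : Measurable Ytil) (hAm : Measurable Atil) (hFm : Measurable F)
    (δ α : ℝ)
    (hYval : ∀ ω, Ytil ω = 1 ∨ Ytil ω = -1)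
    (hδ : (μ {ω | Atil ω = true}).toReal = δ)
    (hpos : ∀ y : ℝ, (y = 1 ∨ y = -1) → ∀ a : Bool, 0 < μ {ω | Ytil ω = y ∧ Atil ω = a})
    (hdisc : ∀ y : ℝ, (y = 1 ∨ y = -1) →
      |(μ {ω | 0 ≤ F ω ∧ Ytil ω = y ∧ Atil ω = false}).toReal
          / (μ {ω | Ytil ω = y ∧ Atil ω = false}).toReal
        - (μ {ω | 0 ≤ F ω ∧ Ytil ω = y ∧ Atil ω = true}).toReal
          / (μ {ω | Ytil ω = y ∧ Atil ω = true}).toReal| ≤ α)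
    (hmatch : ∀ y : ℝ, (y = 1 ∨ y = -1) →
      (μ {ω | Ytil ω = y ∧ Atil ω = false}).toReal / (μ {ω | Atil ω = false}).toReal
        = (μ {ω | Ytil ω = y ∧ Atil ω = true}).toReal / (μ {ω | Atil ω = true}).toReal) :
    (μ {ω | Ytil ω = -1}).toReal *
        ((μ {ω | 0 ≤ F ω ∧ Ytil ω = -1 ∧ Atil ω = true}).toReal
          / (μ {ω | Ytil ω = -1 ∧ Atil ω = true}).toReal)
      + (μ {ω | Ytil ω = 1}).toReal *
        ((μ {ω | F ω < 0 ∧ Ytil ω = 1 ∧ Atil ω = true}).toReal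
          / (μ {ω | Ytil ω = 1 ∧ Atil ω = true}).toReal)
    ≤ ((μ {ω | 0 ≤ F ω ∧ Ytil ω = -1}).toReal + (μ {ω | F ω < 0 ∧ Ytil ω = 1}).toReal)
      + α * (1 - δ) := by

  -- measurability facts
  have hAtrue : MeasurableSet {ω | Atil ω = true} := hAm (measurableSet_singleton true)
  have hY : ∀ y : ℝ, MeasurableSet {ω | Ytil ω = y} := fun y => hYm (measurableSet_singleton y)
  have hF : MeasurableSet {ω | 0 ≤ F ω} := hFm measurableSet_Ici
  have fin : ∀ s : Set Ω, μ s ≠ ⊤ := fun s => measure_ne_top μ s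
  -- split a set according to the value of Atil
  have splitA : ∀ p : Ω → Prop, (μ {ω | p ω}).toReal
      = (μ {ω | p ω ∧ Atil ω = false}).toReal + (μ {ω | p ω ∧ Atil ω = true}).toReal := by
    intro p
    have h := measure_inter_add_diff (μ := μ) {ω | p ω} hAtrue
    have h1 : {ω | p ω} ∩ {ω | Atil ω = true} = {ω | p ω ∧ Atil ω = true} := rfl
    have h2 : {ω | p ω} \ {ω | Atil ω = true} = {ω | p ω ∧ Atil ω = false} := by
      ext ω
      simp only [Set.mem_diff, Set.mem_setOf_eq, Bool.not_eq_true]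
    rw [h1, h2] at h
    rw [← h, ENNReal.toReal_add (fin _) (fin _), add_comm]
  -- split a set according to the sign of F
  have splitF : ∀ p : Ω → Prop, MeasurableSet {ω | p ω} → (μ {ω | p ω}).toReal
      = (μ {ω | 0 ≤ F ω ∧ p ω}).toReal + (μ {ω | F ω < 0 ∧ p ω}).toReal := by
    intro p hp
    have h := measure_inter_add_diff (μ := μ) {ω | p ω} hF
    have h1 : {ω | p ω} ∩ {ω | 0 ≤ F ω} = {ω | 0 ≤ F ω ∧ p ω} := by
      ext ω; simp only [Set.mem_inter_iff, Set.mem_setOf_eq]; tauto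
    have h2 : {ω | p ω} \ {ω | 0 ≤ F ω} = {ω | F ω < 0 ∧ p ω} := by
      ext ω; simp only [Set.mem_diff, Set.mem_setOf_eq, not_le]; tauto
    rw [h1, h2] at h
    rw [← h, ENNReal.toReal_add (fin _) (fin _)]
  -- split a set according to the value of Ytil
  have splitY : ∀ p : Ω → Prop, MeasurableSet {ω | p ω} → (μ {ω | p ω}).toReal
      = (μ {ω | Ytil ω = 1 ∧ p ω}).toReal + (μ {ω | Ytil ω = -1 ∧ p ω}).toReal := by
    intro p hp
    have h := measure_inter_add_diff (μ := μ) {ω | p ω} (hY 1)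
    have h1 : {ω | p ω} ∩ {ω | Ytil ω = 1} = {ω | Ytil ω = 1 ∧ p ω} := by
      ext ω; simp only [Set.mem_inter_iff, Set.mem_setOf_eq]; tauto
    have h2 : {ω | p ω} \ {ω | Ytil ω = 1} = {ω | Ytil ω = (-1:ℝ) ∧ p ω} := by
      ext ω
      simp only [Set.mem_diff, Set.mem_setOf_eq]
      rcases hYval ω with h | h <;> simp [h] <;> norm_num
    rw [h1, h2] at h
    rw [← h, ENNReal.toReal_add (fin _) (fin _)]
  -- name the real quantities
  set a0 := (μ {ω | Ytil ω = (-1:ℝ) ∧ Atil ω = false}).toReal with ha0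
  set a1 := (μ {ω | Ytil ω = (-1:ℝ) ∧ Atil ω = true}).toReal with ha1
  set b0 := (μ {ω | Ytil ω = (1:ℝ) ∧ Atil ω = false}).toReal with hb0
  set b1 := (μ {ω | Ytil ω = (1:ℝ) ∧ Atil ω = true}).toReal with hb1
  set eN0 := (μ {ω | 0 ≤ F ω ∧ Ytil ω = (-1:ℝ) ∧ Atil ω = false}).toReal with heN0
  set eN1 := (μ {ω | 0 ≤ F ω ∧ Ytil ω = (-1:ℝ) ∧ Atil ω = true}).toReal with heN1
  set gP0 := (μ {ω | 0 ≤ F ω ∧ Ytil ω = (1:ℝ) ∧ Atil ω = false}).toReal with hgP0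
  set gP1 := (μ {ω | 0 ≤ F ω ∧ Ytil ω = (1:ℝ) ∧ Atil ω = true}).toReal with hgP1
  set eP0 := (μ {ω | F ω < 0 ∧ Ytil ω = (1:ℝ) ∧ Atil ω = false}).toReal with heP0
  set eP1 := (μ {ω | F ω < 0 ∧ Ytil ω = (1:ℝ) ∧ Atil ω = true}).toReal with heP1
  -- positivity
  have pa0 : 0 < a0 := ENNReal.toReal_pos (hpos (-1) (Or.inr rfl) false).ne' (fin _)
  have pa1 : 0 < a1 := ENNReal.toReal_pos (hpos (-1) (Or.inr rfl) true).ne' (fin _)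
  have pb0 : 0 < b0 := ENNReal.toReal_pos (hpos 1 (Or.inl rfl) false).ne' (fin _)
  have pb1 : 0 < b1 := ENNReal.toReal_pos (hpos 1 (Or.inl rfl) true).ne' (fin _)
  -- mass splits
  have hmN : (μ {ω | Ytil ω = (-1:ℝ)}).toReal = a0 + a1 := splitA _
  have hmP : (μ {ω | Ytil ω = (1:ℝ)}).toReal = b0 + b1 := splitA _
  have hEN : (μ {ω | 0 ≤ F ω ∧ Ytil ω = (-1:ℝ)}).toReal = eN0 + eN1 := by
    have h := splitA (fun ω => 0 ≤ F ω ∧ Ytil ω = (-1:ℝ))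
    have e0 : {ω | (0 ≤ F ω ∧ Ytil ω = (-1:ℝ)) ∧ Atil ω = false}
        = {ω | 0 ≤ F ω ∧ Ytil ω = (-1:ℝ) ∧ Atil ω = false} := by
      ext ω; simp only [Set.mem_setOf_eq]; tauto
    have e1 : {ω | (0 ≤ F ω ∧ Ytil ω = (-1:ℝ)) ∧ Atil ω = true}
        = {ω | 0 ≤ F ω ∧ Ytil ω = (-1:ℝ) ∧ Atil ω = true} := by
      ext ω; simp only [Set.mem_setOf_eq]; tauto
    rw [e0, e1] at h
    exact h
  have hEP : (μ {ω | F ω < 0 ∧ Ytil ω = (1:ℝ)}).toReal = eP0 + eP1 := by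
    have h := splitA (fun ω => F ω < 0 ∧ Ytil ω = (1:ℝ))
    have e0 : {ω | (F ω < 0 ∧ Ytil ω = (1:ℝ)) ∧ Atil ω = false}
        = {ω | F ω < 0 ∧ Ytil ω = (1:ℝ) ∧ Atil ω = false} := by
      ext ω; simp only [Set.mem_setOf_eq]; tauto
    have e1 : {ω | (F ω < 0 ∧ Ytil ω = (1:ℝ)) ∧ Atil ω = true}
        = {ω | F ω < 0 ∧ Ytil ω = (1:ℝ) ∧ Atil ω = true} := by
      ext ω; simp only [Set.mem_setOf_eq]; tauto
    rw [e0, e1] at h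
    exact h
  -- g + e = b  (split the positive-label group masses by sign of F)
  have hb0split : b0 = gP0 + eP0 :=
    splitF (fun ω => Ytil ω = (1:ℝ) ∧ Atil ω = false)
      (((hY 1).inter (hAm (measurableSet_singleton false))))
  have hb1split : b1 = gP1 + eP1 :=
    splitF (fun ω => Ytil ω = (1:ℝ) ∧ Atil ω = true)
      (((hY 1).inter (hAm (measurableSet_singleton true))))
  -- 1 - δ = a0 + b0
  have hAfalse : (μ {ω | Atil ω = false}).toReal = b0 + a0 :=
    splitY (fun ω => Atil ω = false) (hAm (measurableSet_singleton false))
  have htot : (1:ℝ) = δ + (μ {ω | Atil ω = false}).toReal := by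
    have h := splitA (fun _ : Ω => True)
    have e : {ω : Ω | True} = Set.univ := rfl
    rw [e, measure_univ, ENNReal.toReal_one] at h
    have e0 : {ω : Ω | True ∧ Atil ω = false} = {ω | Atil ω = false} := by
      ext ω; simp
    have e1 : {ω : Ω | True ∧ Atil ω = true} = {ω | Atil ω = true} := by
      ext ω; simp
    rw [e0, e1] at h
    rw [h, hδ]; ring
  have hδab : 1 - δ = a0 + b0 := by rw [htot, hAfalse]; ring
  -- discrimination bounds
  have hd1 := hdisc (-1) (Or.inr rfl)
  have hd2 := hdisc 1 (Or.inl rfl)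
  rw [abs_le] at hd1 hd2
  have habs1 : eN1 / a1 - eN0 / a0 ≤ α := by linarith [hd1.1]
  have habs2 : eP1 / b1 - eP0 / b0 ≤ α := by
    have h0 : gP0 / b0 = 1 - eP0 / b0 := by
      have e : gP0 = b0 - eP0 := by linarith [hb0split]
      rw [e, sub_div, div_self pb0.ne']
    have h1 : gP1 / b1 = 1 - eP1 / b1 := by
      have e : gP1 = b1 - eP1 := by linarith [hb1split]
      rw [e, sub_div, div_self pb1.ne']
    have := hd2.1
    rw [h0, h1] at this
    linarith
  -- final arithmetic
  rw [hmN, hmP, hEN, hEP, hδab]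
  have c0 : a0 * (eN0 / a0) = eN0 := by field_simp
  have c1 : a1 * (eN1 / a1) = eN1 := by field_simp
  have d0 : b0 * (eP0 / b0) = eP0 := by field_simp
  have d1 : b1 * (eP1 / b1) = eP1 := by field_simp
  have k1 : a0 * (eN1 / a1) ≤ eN0 + a0 * α := by
    have h := mul_le_mul_of_nonneg_left habs1 pa0.le
    rw [mul_sub, c0] at h
    linarith
  have k2 : b0 * (eP1 / b1) ≤ eP0 + b0 * α := by
    have h := mul_le_mul_of_nonneg_left habs2 pb0.le
    rw [mul_sub, d0] at h
    linarith
  rw [add_mul, add_mul, c1, d1]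
  linarith [k1, k2]
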